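/- Let X be a T₁ topological space and κ an infinite cardinal. If the product space X^κ contains a closed discrete subset of cardinality d(X^κ), then X^κ is e-separable. -/

import Mathlib

open Cardinal Set

universe u

/-- A subset `D` of a topological space is closed discrete iff it is closed and
its subspace topology is discrete. -/
def ClosedDiscrete {X : Type u} [TopologicalSpace X] (D : Set X) : Prop :=
  IsClosed D ∧ DiscreteTopology D

/-- A space is `e`-separable iff it has a dense set which is a countable union of
closed discrete sets. -/
def ESeparable (X : Type u) [TopologicalSpace X] : Prop :=
  ∃ D : ℕ → Set X, (∀ n, ClosedDiscrete (D n)) ∧ Dense (⋃ n, D n)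

/-- The density of a space: the least cardinality of a dense subset. -/
noncomputable def density (X : Type u) [TopologicalSpace X] : Cardinal.{u} :=
  sInf {c | ∃ D : Set X, Dense D ∧ #D = c}

/-- The extent of a space: the supremum of the cardinalities of closed discrete subsets. -/
noncomputable def extent (X : Type u) [TopologicalSpace X] : Cardinal.{u} :=
  sSup {c | ∃ D : Set X, ClosedDiscrete D ∧ #D = c}

lemma discrete_of_cont_inj {A : Type*} {B : Type*} [TopologicalSpace A] [TopologicalSpace B]
    [DiscreteTopology B] {f : A → B} (hc : Continuous f) (hi : Function.Injective f) :
    DiscreteTopology A := by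
  rw [discreteTopology_iff_isOpen_singleton]
  intro a
  have : ({a} : Set A) = f ⁻¹' {f a} := by
    ext x; simp [hi.eq_iff]
  rw [this]
  exact (isOpen_discrete _).preimage hc

lemma eSeparable_of_homeomorph {A : Type u} {B : Type v} [TopologicalSpace A] [TopologicalSpace B]
    (h : A ≃ₜ B) (hA : ESeparable A) : ESeparable B := by
  obtain ⟨D, hD, hdense⟩ := hA
  refine ⟨fun n => h '' D n, fun n => ⟨(h.isClosed_image).mpr (hD n).1, ?_⟩, ?_⟩
  · haveI := (hD n).2
    refine discrete_of_cont_inj (f := fun y : ↥(h '' D n) => (⟨h.symm y, ?_⟩ : ↥(D n))) ?_ ?_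
    · obtain ⟨x, hx, hxy⟩ := y.2
      simpa [← hxy] using hx
    · exact Continuous.subtype_mk (h.symm.continuous.comp continuous_subtype_val) _
    · intro a b hab
      have := congrArg Subtype.val hab
      exact Subtype.ext (h.symm.injective this)
  · rw [← Set.image_iUnion]
    rw [dense_iff_closure_eq, ← h.image_closure, hdense.closure_eq, Set.image_univ,
      h.surjective.range_eq]

lemma aux_main {Y : Type u} [TopologicalSpace Y] [T1Space Y] {S E : Set Y}
    (hS : Dense S) (hp : S.Nonempty) (hEc : IsClosed E) (hEd : DiscreteTopology E)
    (ι : ∀ n : ℕ, (Fin n → S) ↪ E) : ESeparable (ℕ → Y) := by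
  classical
  obtain ⟨p, hpS⟩ := hp
  -- isolating open sets for points of E
  have hiso : ∀ e ∈ E, ∃ U : Set Y, IsOpen U ∧ e ∈ U ∧ U ∩ E ⊆ {e} := by
    intro e he
    have : IsOpen ({⟨e, he⟩} : Set E) := isOpen_discrete _
    rw [isOpen_induced_iff] at this
    obtain ⟨U, hU, hUe⟩ := this
    refine ⟨U, hU, ?_, ?_⟩
    · have : (⟨e, he⟩ : E) ∈ (Subtype.val ⁻¹' U : Set E) := by rw [hUe]; rfl
      exact this
    · rintro y ⟨hyU, hyE⟩
      have : (⟨y, hyE⟩ : E) ∈ (Subtype.val ⁻¹' U : Set E) := hyU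
      rw [hUe] at this
      simpa using congrArg Subtype.val this
  set x : ∀ n : ℕ, (Fin n → S) → (ℕ → Y) :=
    fun n t i => if h : i < n then (t ⟨i, h⟩ : Y) else if i = n then (ι n t : Y) else p with hx
  have hxn : ∀ n t, x n t n = (ι n t : Y) := by
    intro n t; simp [hx]
  have hxlt : ∀ n t (i : ℕ) (h : i < n), x n t i = (t ⟨i, h⟩ : Y) := by
    intro n t i h; simp [hx, h]
  have hxinj : ∀ n, Function.Injective (x n) := by
    intro n t t' htt'
    have : (ι n t : Y) = (ι n t' : Y) := by rw [← hxn n t, ← hxn n t', htt']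
    exact (ι n).injective (Subtype.ext this)
  refine ⟨fun n => Set.range (x n), fun n => ⟨?_, ?_⟩, ?_⟩
  · -- closed
    rw [← isOpen_compl_iff, isOpen_iff_forall_mem_open]
    intro g hg
    by_cases hgE : g n ∈ E
    · obtain ⟨U, hUo, hgU, hUE⟩ := hiso (g n) hgE
      by_cases hex : ∃ t, (ι n t : Y) = g n
      · obtain ⟨t, ht⟩ := hex
        have hgne : g ≠ x n t := fun hgx => hg ⟨t, hgx.symm⟩
        have : ∃ j, g j ≠ x n t j := by
          by_contra hc
          push_neg at hc
          exact hgne (funext hc)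
        obtain ⟨j, hj⟩ := this
        refine ⟨(fun f => f n) ⁻¹' U ∩ (fun f => f j) ⁻¹' ({x n t j}ᶜ), ?_, ?_, ?_⟩
        · rintro f ⟨hfU, hfW⟩ ⟨t', rfl⟩
          simp only [Set.mem_preimage] at hfU hfW
          rw [hxn] at hfU
          have h1 : (ι n t' : Y) ∈ U ∩ E := ⟨hfU, (ι n t').2⟩
          have h2 : (ι n t' : Y) = g n := hUE h1
          have : t' = t := (ι n).injective (Subtype.ext (h2.trans ht.symm))
          subst this
          exact hfW rfl
        · exact (hUo.preimage (continuous_apply n)).inter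
            (isOpen_compl_singleton.preimage (continuous_apply j))
        · exact ⟨hgU, hj⟩
      · refine ⟨(fun f => f n) ⁻¹' U, ?_, hUo.preimage (continuous_apply n), hgU⟩
        rintro f hfU ⟨t', rfl⟩
        simp only [Set.mem_preimage] at hfU
        rw [hxn] at hfU
        have h1 : (ι n t' : Y) ∈ U ∩ E := ⟨hfU, (ι n t').2⟩
        exact hex ⟨t', hUE h1⟩
    · refine ⟨(fun f => f n) ⁻¹' Eᶜ, ?_, hEc.isOpen_compl.preimage (continuous_apply n), hgE⟩
      rintro f hfE ⟨t', rfl⟩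
      refine hfE ?_
      show x n t' n ∈ E
      rw [hxn]; exact (ι n t').2
  · -- discrete
    have hsub : ∀ f : ↥(Set.range (x n)), (f : ℕ → Y) n ∈ E := by
      rintro ⟨f, t, rfl⟩
      show x n t n ∈ E
      rw [hxn]; exact (ι n t).2
    refine discrete_of_cont_inj (f := fun f : ↥(Set.range (x n)) => (⟨(f : ℕ → Y) n, hsub f⟩ : E))
      (Continuous.subtype_mk ((continuous_apply n).comp continuous_subtype_val) _) ?_
    rintro ⟨f, t, rfl⟩ ⟨f', t', rfl⟩ hff'
    have : (ι n t : Y) = (ι n t' : Y) := by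
      have := congrArg Subtype.val hff'
      simpa [hxn] using this
    have : t = t' := (ι n).injective (Subtype.ext this)
    subst this
    rfl
  · -- dense
    rw [dense_iff_inter_open]
    rintro O hO ⟨g, hg⟩
    obtain ⟨I, u, hu, hsubO⟩ := isOpen_pi_iff.mp hO g hg
    set n : ℕ := I.sup id + 1 with hn
    have hI : ∀ i ∈ I, i < n := fun i hi =>
      Nat.lt_succ_of_le (Finset.le_sup (f := id) hi)
    have hsel : ∀ i : Fin n, (i : ℕ) ∈ I → (u i ∩ S).Nonempty := by
      intro i hi
      exact hS.inter_open_nonempty _ (hu i hi).1 ⟨g i, (hu i hi).2⟩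
    set t : Fin n → S := fun i =>
      if h : (i : ℕ) ∈ I then ⟨(hsel i h).choose, (hsel i h).choose_spec.2⟩ else ⟨p, hpS⟩ with htdef
    refine ⟨x n t, ?_, Set.mem_iUnion.mpr ⟨n, Set.mem_range_self t⟩⟩
    apply hsubO
    intro i hi
    have hin : i < n := hI i hi
    rw [hxlt n t i hin]
    simp only [htdef]
    rw [dif_pos (show ((⟨i, hin⟩ : Fin n) : ℕ) ∈ I from hi)]
    exact (hsel ⟨i, hin⟩ hi).choose_spec.1

/-- The curry/shift homeomorphism built from an index equivalence. -/
def piShiftHomeo {X : Type u} [TopologicalSpace X] {ι : Type u} (e : ι ≃ ℕ × ι) :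
    (ι → X) ≃ₜ (ℕ → ι → X) where
  toFun f := fun n i => f (e.symm (n, i))
  invFun g := fun j => g (e j).1 (e j).2
  left_inv f := by funext j; simp
  right_inv g := by funext n i; simp
  continuous_toFun := by
    apply continuous_pi; intro n; apply continuous_pi; intro i
    exact continuous_apply _
  continuous_invFun := by
    apply continuous_pi; intro j
    exact (continuous_apply (e j).2).comp (continuous_apply (e j).1)

/-- If `X^κ` contains a closed discrete subset of cardinality `d(X^κ)` then `X^κ`
is `e`-separable. -/
theorem eSeparable_pow_of_closedDiscrete_density {X : Type u} [TopologicalSpace X] [T1Space X]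
    (κ : Cardinal.{u}) (hκ : ℵ₀ ≤ κ)
    (h : ∃ D : Set (κ.out → X), ClosedDiscrete D ∧ #D = density (κ.out → X)) :
    ESeparable (κ.out → X) := by
  classical
  set Y := κ.out → X with hY
  obtain ⟨E, ⟨hEc, hEd⟩, hEcard⟩ := h
  have hmem : density Y ∈ {c | ∃ D : Set Y, Dense D ∧ #D = c} :=
    csInf_mem ⟨#(Set.univ : Set Y), Set.univ, dense_univ, rfl⟩
  obtain ⟨S, hS, hScard⟩ := hmem
  by_cases hfin : density Y < ℵ₀
  · -- finite case: Y is finite, hence discrete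
    have hSfin : S.Finite := Cardinal.lt_aleph0_iff_set_finite.mp (hScard ▸ hfin)
    have hSuniv : S = Set.univ := by
      rw [← hSfin.isClosed.closure_eq, hS.closure_eq]
    haveI : Finite Y := Set.finite_univ_iff.mp (hSuniv ▸ hSfin)
    refine ⟨fun _ => Set.univ, fun _ => ⟨isClosed_univ, inferInstance⟩, ?_⟩
    rw [Set.iUnion_const]
    exact dense_univ
  · push_neg at hfin
    have hSpos : (0 : Cardinal) < #S := by
      rw [hScard]; exact lt_of_lt_of_le Cardinal.aleph0_pos hfin
    have hSne : S.Nonempty :=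
      Set.nonempty_coe_sort.mp (Cardinal.mk_ne_zero_iff.mp hSpos.ne')
    have hcard : ∀ n : ℕ, #(Fin n → S) ≤ #E := by
      intro n
      have h1 : #(Fin n → S) = #S ^ (n : Cardinal) := by
        rw [Cardinal.mk_arrow]
        simp
      rw [h1, hScard, hEcard]
      exact Cardinal.pow_le hfin (Cardinal.nat_lt_aleph0 n)
    have ι : ∀ n : ℕ, (Fin n → S) ↪ E := fun n => (Cardinal.le_def _ _).mp (hcard n) |>.some
    have hmain : ESeparable (ℕ → Y) := aux_main hS hSne hEc hEd ι
    -- transfer along the homeomorphism (ℕ → Y) ≃ₜ Y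
    have hcard2 : #(ℕ × κ.out) = #κ.out := by
      rw [Cardinal.mk_prod]
      simp only [Cardinal.mk_out]
      simp [Cardinal.aleph0_mul_eq hκ]
    obtain ⟨e⟩ := Cardinal.eq.mp hcard2.symm
    exact eSeparable_of_homeomorph (piShiftHomeo e).symm hmain
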